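/- Let s ≥ 2 and let λ_0,…,λ_{s−2} ∈ {0,1}. Then Σ_{i=0}^{s−2} λ_i·φ(2^i) = φ(Σ_{i=0}^{s−2} λ_i·2^i), where the left-hand sum is taken in Z_2^{2^{s−1}} and the inner sum on the right is taken in Z_{2^s}. -/

import Mathlib

/-- The `i`-th digit of the binary expansion of `u : ZMod (2^s)`. -/
def gdigit (s : ℕ) (u : ZMod (2^s)) (i : ℕ) : ZMod 2 :=
  if (ZMod.val u).testBit i then 1 else 0

/-- Carlet's generalized Gray map `φ : ZMod (2^s) → (Z_2^{s-1} → Z_2)`: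
the coordinate indexed by `y ∈ Z_2^{s-1}` is `u_{s-1} + ∑ u_i y_i`. -/
def gray (s : ℕ) (u : ZMod (2^s)) : (Fin (s - 1) → ZMod 2) → ZMod 2 :=
  fun y => gdigit s u (s - 1) + ∑ i : Fin (s - 1), gdigit s u (i : ℕ) * y i

lemma sum_bits_lt (k : ℕ) (lam : ℕ → ℕ) (hlam : ∀ i, lam i ≤ 1) :
    ∑ i ∈ Finset.range k, lam i * 2 ^ i < 2 ^ k := by
  calc ∑ i ∈ Finset.range k, lam i * 2 ^ i
      ≤ ∑ i ∈ Finset.range k, 1 * 2 ^ i := by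
        apply Finset.sum_le_sum
        intro i _
        exact Nat.mul_le_mul_right _ (hlam i)
    _ = 2 ^ k - 1 := by
        simp [Nat.geomSum_eq]
    _ < 2 ^ k := Nat.sub_lt (Nat.pow_pos (by norm_num)) one_pos

lemma testBit_sum_bits (k : ℕ) (lam : ℕ → ℕ) (hlam : ∀ i, lam i ≤ 1) (j : ℕ) :
    (∑ i ∈ Finset.range k, lam i * 2 ^ i).testBit j = decide (j < k ∧ lam j = 1) := by
  induction k with
  | zero => simp
  | succ k ih =>
    rw [Finset.sum_range_succ]
    have hN := sum_bits_lt k lam hlam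
    set N := ∑ i ∈ Finset.range k, lam i * 2 ^ i with hNdef
    have hk := hlam k
    interval_cases h : lam k
    · simp only [Nat.zero_mul, Nat.add_zero, ih]
      rcases lt_trichotomy j k with hj | hj | hj
      · simp [hj, Nat.lt_succ_of_lt hj]
      · subst hj
        simp [h]
      · have : N < 2 ^ j := lt_of_lt_of_le hN (Nat.pow_le_pow_right (by norm_num) hj.le)
        simp only [decide_eq_decide]
        omega
    · rw [Nat.one_mul, Nat.add_comm]
      rcases lt_trichotomy j k with hj | hj | hj
      · rw [Nat.testBit_two_pow_add_gt hj, ih]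
        simp [hj, Nat.lt_succ_of_lt hj]
      · subst hj
        rw [Nat.testBit_two_pow_add_eq, Nat.testBit_lt_two_pow hN]
        simp [h]
      · have hlt : 2 ^ k + N < 2 ^ j := by
          have h1 : 2 ^ k + N < 2 ^ (k + 1) := by rw [pow_succ]; omega
          exact lt_of_lt_of_le h1 (Nat.pow_le_pow_right (by norm_num) hj)
        rw [Nat.testBit_lt_two_pow hlt]
        have hnot : ¬(j < k + 1 ∧ lam j = 1) := by omega
        simp [hnot]
        omega

theorem gray_sum_two_pows (s : ℕ) (hs : 2 ≤ s) (lam : ℕ → ℕ) (hlam : ∀ i, lam i ≤ 1) :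
    ∑ i ∈ Finset.range (s - 1), lam i • gray s (2 ^ i) =
      gray s (∑ i ∈ Finset.range (s - 1), (lam i : ZMod (2^s)) * 2 ^ i) := by
  haveI : NeZero (2 ^ s) := ⟨by positivity⟩
  set N : ℕ := ∑ i ∈ Finset.range (s - 1), lam i * 2 ^ i with hNdef
  have hNlt : N < 2 ^ (s - 1) := sum_bits_lt _ lam hlam
  have hNlt' : N < 2 ^ s := lt_of_lt_of_le hNlt (Nat.pow_le_pow_right (by norm_num) (by omega))
  have hcast : (∑ i ∈ Finset.range (s - 1), (lam i : ZMod (2^s)) * 2 ^ i) = (N : ZMod (2^s)) := by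
    rw [hNdef]; push_cast; rfl
  have hvalN : ZMod.val ((N : ZMod (2^s))) = N := ZMod.val_natCast_of_lt hNlt'
  have hdigN' : ∀ j, j < s - 1 → gdigit s (N : ZMod (2^s)) j = (lam j : ZMod 2) := by
    intro j hj
    unfold gdigit
    rw [hvalN, testBit_sum_bits _ lam hlam]
    have := hlam j
    interval_cases h : lam j <;> simp [hj, h]
  have hdigNs : gdigit s (N : ZMod (2^s)) (s - 1) = 0 := by
    unfold gdigit
    rw [hvalN, testBit_sum_bits _ lam hlam]
    simp
  have hval2 : ∀ i, i < s - 1 → ZMod.val ((2 : ZMod (2^s)) ^ i) = 2 ^ i := by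
    intro i hi
    have h1 : ((2 : ZMod (2^s)) ^ i) = ((2 ^ i : ℕ) : ZMod (2^s)) := by push_cast; ring
    rw [h1]
    exact ZMod.val_natCast_of_lt (Nat.pow_lt_pow_right (by norm_num) (show i < s by omega))
  have hgray2 : ∀ i (hi : i < s - 1), ∀ y : Fin (s - 1) → ZMod 2,
      gray s (2 ^ i) y = y ⟨i, by omega⟩ := by
    intro i hi y
    unfold gray gdigit
    rw [hval2 i hi]
    rw [Nat.testBit_two_pow_of_ne (show i ≠ s - 1 by omega)]
    simp only [Bool.false_eq_true, if_false, zero_add]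
    rw [Finset.sum_eq_single (⟨i, by omega⟩ : Fin (s - 1))]
    · simp [Nat.testBit_two_pow_self]
    · intro b _ hb
      have hbt : (2 ^ i).testBit (b : ℕ) = false := by
        apply Nat.testBit_two_pow_of_ne
        intro h
        exact hb (Fin.ext h.symm)
      simp [hbt]
    · simp
  funext y
  simp only [Finset.sum_apply, Pi.smul_apply]
  rw [hcast]
  rw [← Fin.sum_univ_eq_sum_range (fun i => lam i • gray s ((2 : ZMod (2^s)) ^ i) y) (s - 1)]
  have hL : ∀ j : Fin (s - 1),
      lam (j : ℕ) • gray s ((2 : ZMod (2^s)) ^ (j : ℕ)) y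
        = gdigit s (N : ZMod (2^s)) (j : ℕ) * y j := by
    intro j
    rw [hgray2 (j : ℕ) j.isLt y, hdigN' (j : ℕ) j.isLt, nsmul_eq_mul]
  have hR : gray s (N : ZMod (2^s)) y
      = ∑ i : Fin (s - 1), gdigit s (N : ZMod (2^s)) (i : ℕ) * y i := by
    unfold gray
    rw [hdigNs, zero_add]
  rw [hR]
  exact Finset.sum_congr rfl (fun j _ => hL j)
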